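/- The function f(X) = -log det(I + X) + tr(X) is matrix-nondecreasing on PSD matrices: if X₁ ⪰ X₂ ⪰ 0 then f(X₁) ≥ f(X₂). -/

import Mathlib

open Matrix
open scoped MatrixOrder

section Aux

variable {n : Type*} [Fintype n] [DecidableEq n]

/-- trace equals sum of eigenvalues for real symmetric matrices -/
lemma aux_trace_eq_sum_eigenvalues {A : Matrix n n ℝ} (hA : A.IsHermitian) :
    A.trace = ∑ i, hA.eigenvalues i := by
  conv_lhs => rw [hA.spectral_theorem]
  rw [Unitary.conjStarAlgAut_apply, Matrix.trace_mul_cycle]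
  have hU : (star (hA.eigenvectorUnitary : Matrix n n ℝ)) *
      (hA.eigenvectorUnitary : Matrix n n ℝ) = 1 := by
    exact Matrix.mem_unitaryGroup_iff'.mp (hA.eigenvectorUnitary).2
  rw [hU, Matrix.one_mul, Matrix.trace_diagonal]
  simp

lemma aux_trace_nonneg {A : Matrix n n ℝ} (hA : A.PosSemidef) : 0 ≤ A.trace := by
  rw [aux_trace_eq_sum_eigenvalues hA.isHermitian]
  exact Finset.sum_nonneg fun i _ => hA.eigenvalues_nonneg i

lemma aux_trace_mul_nonneg {A B : Matrix n n ℝ} (hA : A.PosSemidef) (hB : B.PosSemidef) :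
    0 ≤ (A * B).trace := by
  have hs := CFC.sqrt_mul_sqrt_self A hA.nonneg
  have hHerm : (CFC.sqrt A)ᴴ = CFC.sqrt A := (CFC.sqrt_nonneg A).posSemidef.isHermitian
  have : (CFC.sqrt A * B * CFC.sqrt A).trace = (A * B).trace := by
    rw [Matrix.trace_mul_cycle, hs]
  rw [← this]
  have hpsd : (CFC.sqrt A * B * CFC.sqrt A).PosSemidef := by
    have := hB.mul_mul_conjTranspose_same (CFC.sqrt A)
    rwa [hHerm] at this
  exact aux_trace_nonneg hpsd

lemma aux_det_nonneg {A : Matrix n n ℝ} (hA : A.PosSemidef) : 0 ≤ A.det := by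
  rw [hA.isHermitian.det_eq_prod_eigenvalues]
  exact Finset.prod_nonneg fun i _ => hA.eigenvalues_nonneg i

/-- log det Q ≤ tr Q - n for positive definite Q -/
lemma aux_log_det_le {Q : Matrix n n ℝ} (hQ : Q.PosDef) :
    Real.log Q.det ≤ Q.trace - (Fintype.card n : ℝ) := by
  rw [hQ.isHermitian.det_eq_prod_eigenvalues, aux_trace_eq_sum_eigenvalues hQ.isHermitian]
  simp only [RCLike.ofReal_real_eq_id, id_eq]
  have hpos : ∀ i ∈ Finset.univ, hQ.isHermitian.eigenvalues i ≠ 0 :=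
    fun i _ => (hQ.eigenvalues_pos i).ne'
  rw [Real.log_prod hpos]
  have : ∀ i ∈ Finset.univ (α := n), Real.log (hQ.isHermitian.eigenvalues i) ≤
      hQ.isHermitian.eigenvalues i - 1 :=
    fun i _ => Real.log_le_sub_one_of_pos (hQ.eigenvalues_pos i)
  calc ∑ i, Real.log (hQ.isHermitian.eigenvalues i)
      ≤ ∑ i, (hQ.isHermitian.eigenvalues i - 1) := Finset.sum_le_sum this
    _ = ∑ i, hQ.isHermitian.eigenvalues i - (Fintype.card n : ℝ) := by
        rw [Finset.sum_sub_distrib]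
        simp [Finset.card_univ]

end Aux

theorem neg_logdet_add_trace_monotone (m : ℕ)
    (X₁ X₂ : Matrix (Fin m) (Fin m) ℝ)
    (h : (X₁ - X₂).PosSemidef) (hX₂ : X₂.PosSemidef) :
    -Real.log (1 + X₂).det + X₂.trace ≤ -Real.log (1 + X₁).det + X₁.trace := by
  set D : Matrix (Fin m) (Fin m) ℝ := X₁ - X₂ with hD
  set P : Matrix (Fin m) (Fin m) ℝ := 1 + X₂ with hPdef
  have hP : P.PosDef := Matrix.PosDef.add_posSemidef Matrix.PosDef.one hX₂
  set S : Matrix (Fin m) (Fin m) ℝ := CFC.sqrt P with hSdef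
  have hSS : S * S = P := CFC.sqrt_mul_sqrt_self P hP.posSemidef.nonneg
  have hSpsd : S.PosSemidef := (CFC.sqrt_nonneg P).posSemidef
  have hSherm : Sᴴ = S := hSpsd.isHermitian
  have hdetP : 0 < P.det := hP.det_pos
  have hdetS : 0 < S.det := by
    have h2 : S.det * S.det = P.det := by rw [← Matrix.det_mul, hSS]
    rcases lt_or_eq_of_le (aux_det_nonneg hSpsd) with hlt | heq
    · exact hlt
    · exfalso; rw [← heq] at h2; simp at h2; linarith
  have hSinv : S⁻¹ * S = 1 := Matrix.nonsing_inv_mul S (isUnit_iff_ne_zero.mpr hdetS.ne')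
  have hSinv' : S * S⁻¹ = 1 := Matrix.mul_nonsing_inv S (isUnit_iff_ne_zero.mpr hdetS.ne')
  set T : Matrix (Fin m) (Fin m) ℝ := S⁻¹ with hTdef
  have hTherm : Tᴴ = T := by
    rw [hTdef]; exact (Matrix.IsHermitian.inv hSpsd.isHermitian)
  -- T * P * T = 1
  have hTPT : T * P * T = 1 := by
    rw [← hSS, ← Matrix.mul_assoc T S S, hSinv, Matrix.one_mul, hSinv']
  -- T * T = P⁻¹
  have hTT : T * T = P⁻¹ := by
    rw [hTdef, ← Matrix.mul_inv_rev, hSS]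
  set M : Matrix (Fin m) (Fin m) ℝ := T * D * T with hMdef
  have hM : M.PosSemidef := by
    have := h.mul_mul_conjTranspose_same T
    rwa [hTherm] at this
  set Q : Matrix (Fin m) (Fin m) ℝ := 1 + M with hQdef
  have hQ : Q.PosDef := Matrix.PosDef.add_posSemidef Matrix.PosDef.one hM
  -- Q = T * (1 + X₁) * T
  have hX1P : (1 + X₁) = P + D := by rw [hPdef, hD]; abel
  have hQeq : Q = T * (1 + X₁) * T := by
    rw [hX1P, Matrix.mul_add, Matrix.add_mul, hTPT]
  -- det relation
  have hdetQ : Q.det = (1 + X₁).det / P.det := by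
    rw [hQeq, Matrix.det_mul, Matrix.det_mul]
    have hdetT : T.det = S.det⁻¹ := by rw [hTdef, Matrix.det_nonsing_inv, Ring.inverse_eq_inv']
    rw [hdetT]
    have : P.det = S.det * S.det := by rw [← Matrix.det_mul, hSS]
    rw [this]
    field_simp
  have hdetX1 : 0 < (1 + X₁).det := by
    have := hQ.det_pos
    rw [hdetQ] at this
    exact (div_pos_iff.mp this).resolve_right (fun ⟨_, h2⟩ => absurd hdetP (not_lt.mpr h2.le)) |>.1
  -- log det Q ≤ trace M
  have hlog : Real.log Q.det ≤ M.trace := by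
    have h1 := aux_log_det_le hQ
    have h2 : Q.trace = (Fintype.card (Fin m) : ℝ) + M.trace := by
      rw [hQdef, Matrix.trace_add, Matrix.trace_one]
    rw [h2] at h1
    linarith
  -- trace M ≤ trace D
  have hIP : (1 - P⁻¹ : Matrix (Fin m) (Fin m) ℝ) = T * X₂ * T := by
    have hX2 : X₂ = P - 1 := by rw [hPdef]; abel
    rw [hX2, Matrix.mul_sub, Matrix.sub_mul, hTPT, Matrix.mul_one, hTT]
  have hIPpsd : (1 - P⁻¹ : Matrix (Fin m) (Fin m) ℝ).PosSemidef := by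
    rw [hIP]
    have := hX₂.mul_mul_conjTranspose_same T
    rwa [hTherm] at this
  have htrM : M.trace ≤ D.trace := by
    have h1 : M.trace = (P⁻¹ * D).trace := by
      rw [hMdef, Matrix.trace_mul_cycle, hTT]
    have h2 : 0 ≤ ((1 - P⁻¹) * D).trace := aux_trace_mul_nonneg hIPpsd h
    have h3 : ((1 - P⁻¹) * D).trace = D.trace - (P⁻¹ * D).trace := by
      rw [Matrix.sub_mul, Matrix.one_mul, Matrix.trace_sub]
    rw [h3] at h2
    linarith
  -- assemble
  have hlogdet : Real.log (1 + X₁).det = Real.log P.det + Real.log Q.det := by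
    rw [hdetQ, Real.log_div (by positivity) (by positivity)]
    ring
  have htrD : D.trace = X₁.trace - X₂.trace := by rw [hD, Matrix.trace_sub]
  rw [hlogdet]
  have := hlog.trans htrM
  rw [htrD] at this
  linarith
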